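/- Let I ⊂ S be a Cohen–Macaulay monomial ideal of codimension 2 minimally generated by m+1 monomials u_1,...,u_{m+1}. Then a minimal generating set of the first syzygy module U can be chosen among the Taylor relations, i.e., I admits a Hilbert–Burch matrix A whose rows are Taylor relations; moreover, the graph on [m+1] with an edge {i,j} whenever some row of A has its nonzero entries in columns i and j is a tree on m+1 vertices. -/

import Mathlib

open MvPolynomial

namespace CMCodim2

noncomputable section

/-- The total degree of an exponent vector (of a monomial). -/
def mdeg {σ : Type*} (a : σ →₀ ℕ) : ℕ := a.sum fun _ e => e

/-- The height (codimension) of an ideal: the infimum of the heights of the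
prime ideals containing it. -/
def idealHeight {R : Type*} [CommRing R] (I : Ideal R) : ℕ∞ :=
  ⨅ (p : PrimeSpectrum R) (_ : I ≤ p.asIdeal), Order.height p

/-- An ideal `I` of a polynomial ring is a Cohen–Macaulay ideal of codimension `2`
iff it has height `2` and `R/I` has a free resolution
`0 → R^a → R^b → R → R/I → 0` of length `2` (Auslander–Buchsbaum). -/
def IsCMCodim2 {R : Type*} [CommRing R] (I : Ideal R) : Prop :=
  idealHeight I = 2 ∧
    ∃ (a b : ℕ) (f : (Fin a → R) →ₗ[R] (Fin b → R)) (g : (Fin b → R) →ₗ[R] R),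
      Function.Injective f ∧ LinearMap.range f = LinearMap.ker g ∧
        LinearMap.range g = I

/-- The map `φ₁ : S^{m+1} → S`, `e_i ↦ u_i`, where `u_i` is the (monic) monomial
with exponent vector `d i`. -/
def phi (K : Type*) [Field K] {σ : Type*} (m : ℕ) (d : Fin (m + 1) → (σ →₀ ℕ)) :
    (Fin (m + 1) → MvPolynomial σ K) →ₗ[MvPolynomial σ K] MvPolynomial σ K where
  toFun v := ∑ i, v i * monomial (d i) 1
  map_add' x y := by simp [add_mul, Finset.sum_add_distrib]
  map_smul' c x := by simp [Finset.mul_sum, mul_assoc]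

/-- The Taylor relation `r_{ij} = u_{ji} e_j - u_{ij} e_i ∈ S^{m+1}` of the monomials
`u_i, u_j` with exponent vectors `d i, d j`; here `u_{ji} = u_i / gcd(u_i,u_j)`
has exponent vector `d i - d j` (truncated subtraction). -/
def taylorRel (K : Type*) [Field K] {σ : Type*} (m : ℕ) (d : Fin (m + 1) → (σ →₀ ℕ))
    (i j : Fin (m + 1)) : Fin (m + 1) → MvPolynomial σ K := fun k =>
  if k = j then monomial (d i - d j) 1
  else if k = i then -(monomial (d j - d i) 1) else 0

/-- `t` lists the `m` (unordered) pairs of indices of Taylor relations forming the rows of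
a Hilbert–Burch matrix of the ideal generated by the `m+1` monomials with exponent
vectors `d i`: the corresponding Taylor relations generate (hence, being `m` elements
generating the free rank-`m` module, minimally generate) the first syzygy module
`U = ker φ₁`. -/
def IsHB (K : Type*) [Field K] {σ : Type*} (m : ℕ) (d : Fin (m + 1) → (σ →₀ ℕ))
    (t : Fin m → Fin (m + 1) × Fin (m + 1)) : Prop :=
  (∀ k, (t k).1 ≠ (t k).2) ∧
    Submodule.span (MvPolynomial σ K)
        (Set.range fun k => taylorRel K m d (t k).1 (t k).2) =
      LinearMap.ker (phi K m d)

/-- The graph on `[m+1]` whose edges `{i,j}` are the pairs of columns in which the rows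
of a Hilbert–Burch matrix (given by the list `t` of pairs) have their nonzero entries. -/
def relGraph {m : ℕ} (t : Fin m → Fin (m + 1) × Fin (m + 1)) :
    SimpleGraph (Fin (m + 1)) :=
  SimpleGraph.fromRel fun i j => ∃ k, t k = (i, j)

/-- `T(I)`: the set of relation trees (graphs of Hilbert–Burch matrices) of the ideal
generated by the `m+1` monomials with exponent vectors `d i`. -/
def relTrees (K : Type*) [Field K] {σ : Type*} (m : ℕ) (d : Fin (m + 1) → (σ →₀ ℕ)) :
    Set (SimpleGraph (Fin (m + 1))) :=
  {Γ | ∃ t, IsHB K m d t ∧ relGraph t = Γ}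

/-- The Taylor graph `G(I)`: the union of all relation trees of `I`. -/
def taylorGraph (K : Type*) [Field K] {σ : Type*} (m : ℕ)
    (d : Fin (m + 1) → (σ →₀ ℕ)) : SimpleGraph (Fin (m + 1)) :=
  sSup (relTrees K m d)

/-- `I` is (the monomial ideal) minimally generated by the `m+1` monic monomials with
exponent vectors `d i`. -/
def MinGens (K : Type*) [Field K] {σ : Type*} (m : ℕ) (d : Fin (m + 1) → (σ →₀ ℕ))
    (I : Ideal (MvPolynomial σ K)) : Prop :=
  I = Ideal.span (Set.range fun i => (monomial (d i) 1 : MvPolynomial σ K)) ∧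
    ∀ j : Fin (m + 1), (monomial (d j) 1 : MvPolynomial σ K) ∉
      Ideal.span ((fun i => (monomial (d i) 1 : MvPolynomial σ K)) '' {i | i ≠ j})

/-- The ideal generated by the `m+1` monomials with exponent vectors `d i` has a linear
resolution: all generators have the same degree and all the entries of every
Hilbert–Burch matrix of `I` are linear forms (i.e. every Taylor relation occurring as a
row of a Hilbert–Burch matrix is linear). -/
def HasLinearRes (K : Type*) [Field K] {σ : Type*} (m : ℕ)
    (d : Fin (m + 1) → (σ →₀ ℕ)) : Prop :=
  (∃ c, ∀ i, mdeg (d i) = c) ∧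
    ∀ t, IsHB K m d t →
      ∀ k, mdeg (d (t k).1 - d (t k).2) = 1 ∧ mdeg (d (t k).2 - d (t k).1) = 1

/-- A graph is chordal if every cycle of length at least `4` has a chord, i.e. an edge
of the graph joining two vertices of the cycle which is not an edge of the cycle. -/
def IsChordal {V : Type*} (G : SimpleGraph V) : Prop :=
  ∀ ⦃v : V⦄ (w : G.Walk v v), w.IsCycle → 4 ≤ w.length →
    ∃ a b, a ∈ w.support ∧ b ∈ w.support ∧ G.Adj a b ∧ s(a, b) ∉ w.edges

/-- A maximal clique of a graph. -/
def IsMaxClique {V : Type*} (G : SimpleGraph V) (s : Set V) : Prop :=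
  G.IsClique s ∧ ∀ t : Set V, G.IsClique t → s ⊆ t → t = s

/-- `b` is the "path-begin" function of the tree `G`: for `i ≠ j`, `b i j` is the
first vertex after `i` on the unique path in `G` from `i` to `j` (equivalently, the
neighbour of `i` which is one step closer to `j`). -/
def PathBegin {V : Type*} (G : SimpleGraph V) (b : V → V → V) : Prop :=
  ∀ i j : V, i ≠ j → G.Adj i (b i j) ∧ G.dist (b i j) j + 1 = G.dist i j

/-- The index set of the `2m` indeterminates `x_{ij}`: ordered pairs `(i,j)` such that
`{i,j}` is an edge of `G`. -/
abbrev EdgeVar {N : ℕ} (G : SimpleGraph (Fin N)) : Type :=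
  {p : Fin N × Fin N // G.Adj p.1 p.2}

/-- `ε` enumerates the edges of `G` (each unordered edge appearing exactly once). -/
def EdgeEnum {m : ℕ} (G : SimpleGraph (Fin (m + 1)))
    (ε : Fin m → Fin (m + 1) × Fin (m + 1)) : Prop :=
  ∀ i j : Fin (m + 1), G.Adj i j → ∃! k, ε k = (i, j) ∨ ε k = (j, i)

/-- The generic matrix `A(Γ)` attached to the tree `G` with edges enumerated by `ε`:
the `k`-th row, for the `k`-th edge `{i,j}`, has entry `-x_{ij}` in column `i`,
entry `x_{ji}` in column `j` and `0` elsewhere. -/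
def genMat (K : Type*) [Field K] {m : ℕ} (G : SimpleGraph (Fin (m + 1)))
    (ε : Fin m → Fin (m + 1) × Fin (m + 1)) (hε : ∀ k, G.Adj (ε k).1 (ε k).2) :
    Matrix (Fin m) (Fin (m + 1)) (MvPolynomial (EdgeVar G) K) := fun k l =>
  if l = (ε k).1 then -(X ⟨ε k, hε k⟩)
  else if l = (ε k).2 then X ⟨((ε k).2, (ε k).1), (hε k).symm⟩
  else 0

/-- `v_j`: the maximal minor of the generic matrix `A(Γ)` obtained by omitting the
`j`-th column. -/
def genMinor (K : Type*) [Field K] {m : ℕ} (G : SimpleGraph (Fin (m + 1)))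
    (ε : Fin m → Fin (m + 1) × Fin (m + 1)) (hε : ∀ k, G.Adj (ε k).1 (ε k).2)
    (j : Fin (m + 1)) : MvPolynomial (EdgeVar G) K :=
  ((genMat K G ε hε).submatrix id j.succAbove).det

/-- The monomial `∏_{i ≠ j} x_{i, b(i,j)}`. -/
def genV (K : Type*) [Field K] {m : ℕ} (G : SimpleGraph (Fin (m + 1)))
    (b : Fin (m + 1) → Fin (m + 1) → Fin (m + 1))
    (hb : ∀ i j : Fin (m + 1), i ≠ j → G.Adj i (b i j)) (j : Fin (m + 1)) :
    MvPolynomial (EdgeVar G) K :=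
  ∏ i, if h : i = j then 1 else X ⟨(i, b i j), hb i j h⟩

/-- The exponent vector of the monomial `∏_{i ≠ j} x_{i, b(i,j)}`. -/
def genD {m : ℕ} (G : SimpleGraph (Fin (m + 1)))
    (b : Fin (m + 1) → Fin (m + 1) → Fin (m + 1))
    (hb : ∀ i j : Fin (m + 1), i ≠ j → G.Adj i (b i j)) (j : Fin (m + 1)) :
    EdgeVar G →₀ ℕ :=
  ∑ i, if h : i = j then 0 else Finsupp.single ⟨(i, b i j), hb i j h⟩ 1

end

end CMCodim2


namespace CMCodim2

noncomputable section AuxGraph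

open SimpleGraph Finset

variable {V : Type*} [Fintype V] [DecidableEq V]

/-- A connected graph on `N` vertices has at least `N - 1` edges. -/
theorem card_le_card_edgeFinset_add_one (G : SimpleGraph V) [DecidableRel G.Adj]
    (hconn : G.Connected) : Fintype.card V ≤ G.edgeFinset.card + 1 := by
  classical
  have hne : Nonempty V := hconn.nonempty
  obtain ⟨r⟩ := hne
  have hstep : ∀ v : V, v ≠ r → ∃ w, G.Adj v w ∧ G.dist w r < G.dist v r := by
    intro v hv
    have hreach : G.Reachable v r := hconn v r
    obtain ⟨p, hp⟩ := hreach.exists_walk_length_eq_dist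
    cases p with
    | nil => exact absurd rfl hv
    | cons h q =>
      refine ⟨_, h, ?_⟩
      have h1 : G.dist _ r ≤ q.length := SimpleGraph.dist_le q
      have h2 : q.length + 1 = G.dist v r := by
        simpa [SimpleGraph.Walk.length_cons] using hp
      omega
  choose! b hb1 hb2 using hstep
  have hinj : Set.InjOn (fun v => s(v, b v)) ↑(Finset.univ.erase r) := by
    intro u hu v hv huv
    simp only [Finset.coe_erase, Set.mem_diff, Finset.coe_univ] at hu hv
    have hu' : u ≠ r := by simpa using hu.2
    have hv' : v ≠ r := by simpa using hv.2
    by_contra hne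
    rcases Sym2.eq_iff.mp huv with ⟨h1, h2⟩ | ⟨h1, h2⟩
    · exact hne h1
    · have g1 := hb2 u hu'
      have g2 := hb2 v hv'
      rw [h2] at g1
      rw [← h1] at g2
      omega
  have hmaps : ∀ v ∈ Finset.univ.erase r, s(v, b v) ∈ G.edgeFinset := by
    intro v hv
    rw [SimpleGraph.mem_edgeFinset]
    exact (hb1 v (Finset.ne_of_mem_erase hv))
  have hcard := Finset.card_le_card_of_injOn _ hmaps hinj
  rw [Finset.card_erase_of_mem (Finset.mem_univ r), Finset.card_univ] at hcard
  have : 1 ≤ Fintype.card V := Fintype.card_pos_iff.mpr ⟨r⟩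
  omega

theorem isAcyclic_of_card (G : SimpleGraph V) [DecidableRel G.Adj]
    (hconn : G.Connected) (hcard : G.edgeFinset.card + 1 ≤ Fintype.card V) :
    G.IsAcyclic := by
  classical
  rw [SimpleGraph.isAcyclic_iff_forall_adj_isBridge]
  intro v w hadj
  by_contra hnb
  rw [SimpleGraph.isBridge_iff] at hnb
  push_neg at hnb
  have hreach : (G \ SimpleGraph.fromEdgeSet {s(v, w)}).Reachable v w := hnb
  set G' := G.deleteEdges {s(v, w)} with hG'
  have hG'eq : G' = G \ SimpleGraph.fromEdgeSet {s(v, w)} := rfl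
  have hreach' : G'.Reachable v w := by rw [hG'eq]; exact hreach
  have hGle : ∀ x y, G.Reachable x y → G'.Reachable x y := by
    intro x y ⟨p⟩
    induction p with
    | nil => exact SimpleGraph.Reachable.refl _
    | @cons x' y' z' h q ih =>
      refine SimpleGraph.Reachable.trans ?_ ih
      by_cases he : s(x', y') = s(v, w)
      · rcases Sym2.eq_iff.mp he with ⟨rfl, rfl⟩ | ⟨rfl, rfl⟩
        · exact hreach'
        · exact hreach'.symm
      · refine SimpleGraph.Adj.reachable (?_ : G'.Adj x' y')
        rw [hG'eq, SimpleGraph.sdiff_adj, SimpleGraph.fromEdgeSet_adj]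
        exact ⟨h, fun hc => he hc.1⟩
  have hG'conn : G'.Connected := by
    rw [SimpleGraph.connected_iff]
    exact ⟨fun x y => hGle x y (hconn x y), hconn.nonempty⟩
  have h1 := card_le_card_edgeFinset_add_one G' hG'conn
  have h2 : G'.edgeFinset = G.edgeFinset \ {s(v, w)} := by
    have h6 := SimpleGraph.edgeFinset_deleteEdges (G := G) ({s(v, w)} : Finset (Sym2 V))
    convert h6 using 3
    exact Finset.coe_singleton _ |>.symm
  have h3 : s(v, w) ∈ G.edgeFinset := SimpleGraph.mem_edgeFinset.mpr hadj
  have h4 : G'.edgeFinset.card = G.edgeFinset.card - 1 := by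
    rw [h2, Finset.card_sdiff_of_subset (Finset.singleton_subset_iff.mpr h3), Finset.card_singleton]
  have h5 : 1 ≤ G.edgeFinset.card := Finset.card_pos.mpr ⟨_, h3⟩
  omega


end AuxGraph

noncomputable section Aux

open MvPolynomial

section Lemmas

open scoped Classical

variable {K : Type*} [Field K] {σ : Type*} {m : ℕ} (d : Fin (m + 1) → (σ →₀ ℕ))

lemma exp_le_apply {a b : σ →₀ ℕ} (h : a ≤ b) (s : σ) : a s ≤ b s :=
  Finsupp.le_def.mp h s

lemma exp_sup_apply (a b : σ →₀ ℕ) (s : σ) : (a ⊔ b) s = max (a s) (b s) :=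
  Finsupp.sup_apply a b s

lemma exp_sub_add (a b : σ →₀ ℕ) : (a - b) + b = (b - a) + a := by
  ext s; simp only [Finsupp.add_apply, Finsupp.tsub_apply]; omega

lemma exp_key {a b E : σ →₀ ℕ} (ha : a ≤ E) (hb : b ≤ E) :
    (E - (a ⊔ b)) + (a - b) = E - b := by
  ext s
  have h1 := exp_le_apply ha s
  have h2 := exp_le_apply hb s
  simp only [Finsupp.add_apply, Finsupp.tsub_apply, exp_sup_apply]
  omega

lemma exp_sub_le_sub {a b E : σ →₀ ℕ} (hb : b ≤ E) :
    a - b ≤ E - b ↔ a ⊔ b ≤ E := by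
  rw [Finsupp.le_def, Finsupp.le_def]
  constructor
  · intro h s; have h1 := exp_le_apply hb s; have h2 := h s
    simp only [Finsupp.tsub_apply] at h2
    simp only [exp_sup_apply]; omega
  · intro h s; have h1 := exp_le_apply hb s; have h2 := h s
    simp only [exp_sup_apply] at h2
    simp only [Finsupp.tsub_apply]; omega

lemma exp_sub_sub {a b E : σ →₀ ℕ} (ha : a ≤ E) (hb : b ≤ E) :
    (E - b) - (a - b) = E - (a ⊔ b) := by
  ext s
  have h1 := exp_le_apply ha s
  have h2 := exp_le_apply hb s
  simp only [Finsupp.tsub_apply, exp_sup_apply]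
  omega

lemma phi_apply (v : Fin (m + 1) → MvPolynomial σ K) :
    phi K m d v = ∑ i, v i * monomial (d i) 1 := rfl

lemma phi_taylorRel (i j : Fin (m + 1)) (hij : i ≠ j) :
    phi K m d (taylorRel K m d i j) = 0 := by
  rw [phi_apply]
  rw [Finset.sum_eq_add_of_mem i j (Finset.mem_univ i) (Finset.mem_univ j) hij ?_]
  · have h1 : taylorRel K m d i j i = -(monomial (d j - d i) 1) := by
      simp [taylorRel, hij]
    have h2 : taylorRel K m d i j j = monomial (d i - d j) 1 := by
      simp [taylorRel]
    rw [h1, h2, neg_mul, monomial_mul, monomial_mul, one_mul, exp_sub_add]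
    ring
  · intro k _ hk
    simp only [taylorRel, if_neg hk.2, if_neg hk.1, zero_mul]

lemma taylorRel_snd (i j : Fin (m + 1)) :
    taylorRel K m d i j j = monomial (d i - d j) 1 := by simp [taylorRel]

lemma taylorRel_fst (i j : Fin (m + 1)) (hij : i ≠ j) :
    taylorRel K m d i j i = -(monomial (d j - d i) 1) := by simp [taylorRel, hij]

lemma taylorRel_other (i j k : Fin (m + 1)) (hki : k ≠ i) (hkj : k ≠ j) :
    taylorRel K m d i j k = 0 := by simp [taylorRel, hki, hkj]

/-- Multidegree-`E` component extraction (with shifts `d`). -/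
def comp (E : σ →₀ ℕ) (v : Fin (m + 1) → MvPolynomial σ K) :
    Fin (m + 1) → MvPolynomial σ K := fun l =>
  if d l ≤ E then monomial (E - d l) (coeff (E - d l) (v l)) else 0

lemma comp_add (E : σ →₀ ℕ) (v w : Fin (m + 1) → MvPolynomial σ K) :
    comp d E (v + w) = comp d E v + comp d E w := by
  funext l
  simp only [comp, Pi.add_apply, coeff_add, map_add]
  split <;> simp

lemma comp_zero (E : σ →₀ ℕ) : comp d E (0 : Fin (m + 1) → MvPolynomial σ K) = 0 := by
  funext l
  simp only [comp, Pi.zero_apply, coeff_zero, map_zero]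
  split <;> simp

/-- `comp` as an additive monoid hom. -/
def compHom (E : σ →₀ ℕ) :
    (Fin (m + 1) → MvPolynomial σ K) →+ (Fin (m + 1) → MvPolynomial σ K) where
  toFun := comp d E
  map_zero' := comp_zero d E
  map_add' := comp_add d E

lemma phi_comp (E : σ →₀ ℕ) (v : Fin (m + 1) → MvPolynomial σ K) :
    phi K m d (comp d E v) = monomial E (coeff E (phi K m d v)) := by
  rw [phi_apply, phi_apply, coeff_sum]
  have h1 : ∀ l : Fin (m + 1),
      comp d E v l * monomial (d l) 1 =
        monomial E (coeff E (v l * monomial (d l) 1)) := by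
    intro l
    rw [coeff_mul_monomial']
    simp only [comp]
    split
    · next h =>
      rw [monomial_mul, tsub_add_cancel_of_le h]
    · next h =>
      rw [zero_mul, map_zero]
  rw [Finset.sum_congr rfl fun l _ => h1 l, ← map_sum]

/-- The finite set of multidegrees relevant to `v`. -/
def mdegs (v : Fin (m + 1) → MvPolynomial σ K) : Finset (σ →₀ ℕ) :=
  Finset.univ.biUnion fun l => (v l).support.image (· + d l)

lemma sum_comp (v : Fin (m + 1) → MvPolynomial σ K) :
    ∑ E ∈ mdegs d v, comp d E v = v := by
  funext l
  rw [Finset.sum_apply]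
  have hsub : (v l).support.image (· + d l) ⊆ mdegs d v := by
    intro E hE
    exact Finset.mem_biUnion.mpr ⟨l, Finset.mem_univ l, hE⟩
  rw [← Finset.sum_subset hsub ?van]
  case van =>
    intro E _ hE
    simp only [comp]
    split
    · next h =>
      have : coeff (E - d l) (v l) = 0 := by
        by_contra hc
        exact hE (Finset.mem_image.mpr ⟨E - d l, mem_support_iff.mpr hc,
          tsub_add_cancel_of_le h⟩)
      rw [this, map_zero]
    · rfl
  rw [Finset.sum_image (fun a _ b _ h => by
    exact add_left_injective (d l) h)]
  have h2 : ∀ a ∈ (v l).support, comp d (a + d l) v l = monomial a (coeff a (v l)) := by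
    intro a _
    simp only [comp, if_pos (le_add_self : d l ≤ a + d l), add_tsub_cancel_right]
  rw [Finset.sum_congr rfl h2, support_sum_monomial_coeff]

/-- The set of all Taylor relations. -/
def TRels : Set (Fin (m + 1) → MvPolynomial σ K) :=
  {w | ∃ i j : Fin (m + 1), i ≠ j ∧ w = taylorRel K m d i j}

lemma comp_mem_span (E : σ →₀ ℕ) (v : Fin (m + 1) → MvPolynomial σ K)
    (hv : phi K m d v = 0) :
    comp d E v ∈ Submodule.span (MvPolynomial σ K) (TRels d) := by
  classical
  set c : Fin (m + 1) → K := fun l => coeff (E - d l) (v l) with hc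
  set J : Finset (Fin (m + 1)) := Finset.univ.filter (fun l => d l ≤ E) with hJ
  have hsum : ∑ l ∈ J, c l = 0 := by
    have h0 : coeff E (phi K m d v) = 0 := by rw [hv, coeff_zero]
    rw [phi_apply, coeff_sum] at h0
    have h1 : ∀ l : Fin (m + 1),
        coeff E (v l * monomial (d l) 1) = if d l ≤ E then c l else 0 := by
      intro l
      rw [coeff_mul_monomial']
      split <;> simp [hc]
    rw [Finset.sum_congr rfl fun l _ => h1 l] at h0
    rw [hJ, Finset.sum_filter]
    exact h0
  rcases Finset.eq_empty_or_nonempty J with hJe | ⟨i0, hi0⟩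
  · have : comp d E v = 0 := by
      funext l
      have : ¬ d l ≤ E := by
        intro h
        have : l ∈ J := by simp [hJ, h]
        simp [hJe] at this
      simp [comp, this]
    rw [this]; exact Submodule.zero_mem _
  · have hi0E : d i0 ≤ E := by
      have := hi0; rw [hJ, Finset.mem_filter] at this; exact this.2
    have key : comp d E v = ∑ l ∈ J.erase i0,
        (monomial (E - (d i0 ⊔ d l)) (c l) : MvPolynomial σ K) • taylorRel K m d i0 l := by
      funext k
      rw [Finset.sum_apply]
      by_cases hk : k = i0
      · subst hk
        have h1 : ∀ l ∈ J.erase k,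
            ((monomial (E - (d k ⊔ d l)) (c l) : MvPolynomial σ K) •
              taylorRel K m d k l) k = monomial (E - d k) (- c l) := by
          intro l hl
          have hlk : k ≠ l := (Finset.ne_of_mem_erase hl).symm
          have hlE : d l ≤ E := by
            have := Finset.mem_of_mem_erase hl
            rw [hJ, Finset.mem_filter] at this; exact this.2
          rw [Pi.smul_apply, smul_eq_mul, taylorRel_fst d k l hlk]
          rw [mul_neg, monomial_mul, mul_one]
          rw [sup_comm (d k) (d l), exp_key hlE hi0E]
          rw [map_neg]
        rw [Finset.sum_congr rfl h1, ← map_sum]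
        have h2 : ∑ l ∈ J.erase k, - c l = c k := by
          rw [Finset.sum_neg_distrib]
          have h3 := Finset.sum_erase_add J c hi0
          rw [hsum] at h3
          linear_combination -h3
        rw [h2]
        simp only [comp, if_pos hi0E]; rfl
      · by_cases hkJ : k ∈ J
        · have hkE : d k ≤ E := by rw [hJ, Finset.mem_filter] at hkJ; exact hkJ.2
          have hkmem : k ∈ J.erase i0 := Finset.mem_erase.mpr ⟨hk, hkJ⟩
          rw [Finset.sum_eq_single_of_mem k hkmem ?h0]
          case h0 =>
            intro l _ hlk
            rw [Pi.smul_apply, smul_eq_mul, taylorRel_other d i0 l k hk (Ne.symm hlk),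
              mul_zero]
          rw [Pi.smul_apply, smul_eq_mul, taylorRel_snd d i0 k]
          rw [monomial_mul, mul_one, exp_key hi0E hkE]
          simp only [comp, if_pos hkE]; rfl
        · have hkE : ¬ d k ≤ E := by
            intro h; exact hkJ (by simp [hJ, h])
          have h1 : ∀ l ∈ J.erase i0,
              ((monomial (E - (d i0 ⊔ d l)) (c l) : MvPolynomial σ K) •
                taylorRel K m d i0 l) k = 0 := by
            intro l hl
            have hlJ : l ∈ J := Finset.mem_of_mem_erase hl
            have hkl : k ≠ l := by rintro rfl; exact hkJ hlJ
            rw [Pi.smul_apply, smul_eq_mul, taylorRel_other d i0 l k hk hkl, mul_zero]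
          rw [Finset.sum_congr rfl h1, Finset.sum_const_zero]
          simp [comp, hkE]
    rw [key]
    refine Submodule.sum_mem _ fun l hl => Submodule.smul_mem _ _ ?_
    exact Submodule.subset_span ⟨i0, l, fun h => (Finset.ne_of_mem_erase hl) h.symm, rfl⟩

/-- **Taylor relations generate the syzygy module.** -/
theorem ker_phi_eq_span :
    LinearMap.ker (phi K m d) = Submodule.span (MvPolynomial σ K) (TRels d) := by
  apply le_antisymm
  · intro v hv
    rw [LinearMap.mem_ker] at hv
    rw [← sum_comp d v]
    exact Submodule.sum_mem _ fun E _ => comp_mem_span d E v hv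
  · rw [Submodule.span_le]
    rintro w ⟨i, j, hij, rfl⟩
    simpa [LinearMap.mem_ker] using phi_taylorRel d i j hij

lemma comp_smul_taylorRel (E : σ →₀ ℕ) (q : MvPolynomial σ K) (i j : Fin (m + 1))
    (hij : i ≠ j) :
    comp d E (q • taylorRel K m d i j) =
      if (d i ⊔ d j) ≤ E then
        ((monomial (E - (d i ⊔ d j)) (coeff (E - (d i ⊔ d j)) q) : MvPolynomial σ K) •
          taylorRel K m d i j)
      else 0 := by
  funext k
  have hlhs : comp d E (q • taylorRel K m d i j) k =
      if d k ≤ E then monomial (E - d k) (coeff (E - d k) (q * taylorRel K m d i j k))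
      else 0 := by
    simp only [comp, Pi.smul_apply, smul_eq_mul]
  by_cases hkj : k = j
  · subst hkj
    rw [hlhs, taylorRel_snd d i k]
    by_cases hsup : d i ⊔ d k ≤ E
    · have hkE : d k ≤ E := le_trans le_sup_right hsup
      have hiE : d i ≤ E := le_trans le_sup_left hsup
      rw [if_pos hkE, if_pos hsup, Pi.smul_apply, smul_eq_mul, taylorRel_snd d i k,
        coeff_mul_monomial', if_pos ((exp_sub_le_sub hkE).mpr hsup), exp_sub_sub hiE hkE,
        monomial_mul, mul_one, exp_key hiE hkE]
    · rw [if_neg hsup, Pi.zero_apply]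
      by_cases hkE : d k ≤ E
      · rw [if_pos hkE, coeff_mul_monomial',
          if_neg (fun h => hsup ((exp_sub_le_sub hkE).mp h)), map_zero]
      · rw [if_neg hkE]
  · by_cases hki : k = i
    · subst hki
      rw [hlhs, taylorRel_fst d k j hij]
      by_cases hsup : d k ⊔ d j ≤ E
      · have hkE : d k ≤ E := le_trans le_sup_left hsup
        have hjE : d j ≤ E := le_trans le_sup_right hsup
        have hsup' : d j ⊔ d k ≤ E := by rwa [sup_comm]
        rw [if_pos hkE, if_pos hsup, Pi.smul_apply, smul_eq_mul, taylorRel_fst d k j hij,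
          mul_neg, coeff_neg, coeff_mul_monomial',
          if_pos ((exp_sub_le_sub hkE).mpr hsup'), exp_sub_sub hjE hkE,
          mul_neg, monomial_mul, mul_one, map_neg]
        rw [sup_comm (d k) (d j), exp_key hjE hkE, mul_one]
      · rw [if_neg hsup, Pi.zero_apply]
        by_cases hkE : d k ≤ E
        · have hsup' : ¬ d j ⊔ d k ≤ E := by rwa [sup_comm] at hsup
          rw [if_pos hkE, mul_neg, coeff_neg, coeff_mul_monomial',
            if_neg (fun h => hsup' ((exp_sub_le_sub hkE).mp h)), neg_zero, map_zero]
        · rw [if_neg hkE]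
    · rw [hlhs, taylorRel_other d i j k hki hkj, mul_zero, coeff_zero, map_zero, ite_self]
      split
      · rw [Pi.smul_apply, smul_eq_mul, taylorRel_other d i j k hki hkj, mul_zero]
      · rw [Pi.zero_apply]

lemma smul_single_one (i : Fin (m + 1)) (r : MvPolynomial σ K) :
    r • (Pi.single i 1 : Fin (m + 1) → MvPolynomial σ K) = Pi.single i r := by
  funext l
  by_cases h : l = i <;> simp [Pi.single_apply, h]

lemma phi_eq_linearCombination :
    phi K m d = Fintype.linearCombination (MvPolynomial σ K)
      (fun i => (monomial (d i) 1 : MvPolynomial σ K)) := by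
  apply LinearMap.ext
  intro v
  rw [phi_apply, Fintype.linearCombination_apply]
  simp [smul_eq_mul]

lemma range_phi :
    LinearMap.range (phi K m d) =
      Ideal.span (Set.range fun i => (monomial (d i) 1 : MvPolynomial σ K)) := by
  rw [phi_eq_linearCombination, Fintype.range_linearCombination]

section Homological

variable {s a b : ℕ} (e : Fin s → Fin (m + 1) × Fin (m + 1))

/-- The syzygy evaluation map `S^s → S^{m+1}`. -/
def sig (d : Fin (m + 1) → (σ →₀ ℕ)) (e : Fin s → Fin (m + 1) × Fin (m + 1)) :
    (Fin s → MvPolynomial σ K) →ₗ[MvPolynomial σ K] (Fin (m + 1) → MvPolynomial σ K) :=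
  Fintype.linearCombination (MvPolynomial σ K)
    (fun k => taylorRel K m d (e k).1 (e k).2)

lemma sig_apply (q : Fin s → MvPolynomial σ K) :
    sig d e q = ∑ k, q k • taylorRel K m d (e k).1 (e k).2 := by
  simp [sig, Fintype.linearCombination_apply]

lemma range_sig :
    LinearMap.range (sig (K := K) d e) =
      Submodule.span (MvPolynomial σ K)
        (Set.range fun k => taylorRel K m d (e k).1 (e k).2) :=
  Fintype.range_linearCombination _ _

/-- From a minimal choice of Taylor relations, any dependency has coefficients
with vanishing constant term. -/
lemma dep_constantCoeff_eq_zero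
    (hne : ∀ k, (e k).1 ≠ (e k).2)
    (hU : Submodule.span (MvPolynomial σ K)
        (Set.range fun k => taylorRel K m d (e k).1 (e k).2) =
      LinearMap.ker (phi K m d))
    (hmin : ∀ k0 : Fin s, Submodule.span (MvPolynomial σ K)
        ((fun k => taylorRel K m d (e k).1 (e k).2) '' {k | k ≠ k0}) ≠
      LinearMap.ker (phi K m d))
    (q : Fin s → MvPolynomial σ K) (hq : sig d e q = 0) (k0 : Fin s) :
    constantCoeff (q k0) = 0 := by
  classical
  by_contra hc
  set R : Fin s → (Fin (m + 1) → MvPolynomial σ K) :=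
    fun k => taylorRel K m d (e k).1 (e k).2 with hR
  set E0 : σ →₀ ℕ := d (e k0).1 ⊔ d (e k0).2 with hE0
  have h0 : ∑ k, q k • R k = 0 := by rw [← sig_apply d e q, hq]
  have h1 : ∑ k, comp d E0 (q k • R k) = 0 := by
    have := congrArg (compHom (K := K) d E0) h0
    rw [map_sum] at this
    simpa [compHom, comp_zero] using this
  have h2 : ∀ k, comp d E0 (q k • R k) =
      if (d (e k).1 ⊔ d (e k).2) ≤ E0 then
        ((monomial (E0 - (d (e k).1 ⊔ d (e k).2))
          (coeff (E0 - (d (e k).1 ⊔ d (e k).2)) (q k)) : MvPolynomial σ K) • R k)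
      else 0 := fun k => comp_smul_taylorRel d E0 (q k) _ _ (hne k)
  rw [Finset.sum_congr rfl fun k _ => h2 k] at h1
  rw [← Finset.sum_erase_add _ _ (Finset.mem_univ k0)] at h1
  have h3 : (if (d (e k0).1 ⊔ d (e k0).2) ≤ E0 then
      ((monomial (E0 - (d (e k0).1 ⊔ d (e k0).2))
        (coeff (E0 - (d (e k0).1 ⊔ d (e k0).2)) (q k0)) : MvPolynomial σ K) • R k0)
      else 0) = (C (constantCoeff (q k0)) : MvPolynomial σ K) • R k0 := by
    rw [if_pos (le_refl E0), tsub_self, monomial_zero', constantCoeff_eq]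
  rw [h3] at h1
  have h4 : (C (constantCoeff (q k0)) : MvPolynomial σ K) • R k0 =
      - ∑ k ∈ Finset.univ.erase k0, (if (d (e k).1 ⊔ d (e k).2) ≤ E0 then
        ((monomial (E0 - (d (e k).1 ⊔ d (e k).2))
          (coeff (E0 - (d (e k).1 ⊔ d (e k).2)) (q k)) : MvPolynomial σ K) • R k)
      else 0) := by
    exact eq_neg_of_add_eq_zero_right h1
  have hmem : R k0 ∈ Submodule.span (MvPolynomial σ K) (R '' {k | k ≠ k0}) := by
    have h5 : R k0 = (C (constantCoeff (q k0))⁻¹ : MvPolynomial σ K) •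
        ((C (constantCoeff (q k0)) : MvPolynomial σ K) • R k0) := by
      rw [smul_smul, ← C_mul, inv_mul_cancel₀ hc, C_1, one_smul]
    rw [h5, h4]
    refine Submodule.smul_mem _ _ (Submodule.neg_mem _ (Submodule.sum_mem _ fun k hk => ?_))
    split
    · exact Submodule.smul_mem _ _
        (Submodule.subset_span ⟨k, Finset.ne_of_mem_erase hk, rfl⟩)
    · exact Submodule.zero_mem _
  apply hmin k0
  apply le_antisymm
  · rw [Submodule.span_le]
    rintro w ⟨k, _, rfl⟩
    simpa [LinearMap.mem_ker] using phi_taylorRel d _ _ (hne k)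
  · rw [← hU, Submodule.span_le]
    rintro w ⟨k, rfl⟩
    by_cases hkk : k = k0
    · subst hkk; exact hmem
    · exact Submodule.subset_span ⟨k, hkk, rfl⟩

lemma smul_single_one' {N : ℕ} (i : Fin N) (r : MvPolynomial σ K) :
    r • (Pi.single i 1 : Fin N → MvPolynomial σ K) = Pi.single i r := by
  funext l
  by_cases h : l = i <;> simp [Pi.single_apply, h]

lemma sum_smul_map {N : ℕ} {M₂ : Type*} [AddCommMonoid M₂]
    [Module (MvPolynomial σ K) M₂]
    (F : (Fin N → MvPolynomial σ K) →ₗ[MvPolynomial σ K] M₂)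
    (v : Fin N → MvPolynomial σ K) :
    ∑ i, v i • F (Pi.single i 1) = F v := by
  have h1 : ∀ i, v i • F (Pi.single i 1) = F (Pi.single i (v i)) := fun i => by
    rw [← map_smul, smul_single_one']
  rw [Finset.sum_congr rfl fun i _ => h1 i, ← map_sum, Finset.univ_sum_single]

lemma phi_single (i : Fin (m + 1)) :
    phi K m d (Pi.single i 1) = monomial (d i) 1 := by
  have := sum_smul_map (phi K m d) (Pi.single i 1)
  rw [phi_apply]
  rw [Finset.sum_eq_single_of_mem i (Finset.mem_univ i) ?h0]
  · simp
  case h0 =>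
    intro l _ hl
    simp [Pi.single_apply, hl]

/-- If the chosen Taylor relations are a minimal generating set of the syzygy module
and `S/I` admits a length-2 free resolution, then the relations are linearly
independent, i.e. `ker σ = ⊥`. -/
theorem ker_sig_eq_bot
    (hne : ∀ k, (e k).1 ≠ (e k).2)
    (hU : Submodule.span (MvPolynomial σ K)
        (Set.range fun k => taylorRel K m d (e k).1 (e k).2) =
      LinearMap.ker (phi K m d))
    (hmin : ∀ k0 : Fin s, Submodule.span (MvPolynomial σ K)
        ((fun k => taylorRel K m d (e k).1 (e k).2) '' {k | k ≠ k0}) ≠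
      LinearMap.ker (phi K m d))
    (f : (Fin a → MvPolynomial σ K) →ₗ[MvPolynomial σ K] (Fin b → MvPolynomial σ K))
    (g : (Fin b → MvPolynomial σ K) →ₗ[MvPolynomial σ K] MvPolynomial σ K)
    (hf : Function.Injective f) (hfg : LinearMap.range f = LinearMap.ker g)
    (hgphi : LinearMap.range g = LinearMap.range (phi K m d)) :
    LinearMap.ker (sig (K := K) d e) = ⊥ := by
  classical
  set R : Fin s → (Fin (m + 1) → MvPolynomial σ K) :=
    fun k => taylorRel K m d (e k).1 (e k).2 with hR
  have hURange : LinearMap.range (sig (K := K) d e) = LinearMap.ker (phi K m d) := by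
    rw [range_sig]; exact hU
  -- the lift α of φ through g
  have hα : ∀ i : Fin (m + 1), ∃ w : Fin b → MvPolynomial σ K,
      g w = monomial (d i) 1 := by
    intro i
    have : (monomial (d i) 1 : MvPolynomial σ K) ∈ LinearMap.range g := by
      rw [hgphi]; exact ⟨Pi.single i 1, phi_single d i⟩
    exact this
  choose w hw using hα
  set α := Fintype.linearCombination (MvPolynomial σ K) w with hαdef
  have hgα : ∀ v, g (α v) = phi K m d v := by
    intro v
    rw [hαdef, Fintype.linearCombination_apply, map_sum, phi_apply]
    exact Finset.sum_congr rfl fun i _ => by rw [map_smul, hw, smul_eq_mul]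
  -- the lift β of g through φ
  have hβ : ∀ j : Fin b, ∃ v : Fin (m + 1) → MvPolynomial σ K,
      phi K m d v = g (Pi.single j 1) := by
    intro j
    have : g (Pi.single j 1) ∈ LinearMap.range (phi K m d) := by
      rw [← hgphi]; exact ⟨_, rfl⟩
    exact this
  choose βv hβv using hβ
  set β := Fintype.linearCombination (MvPolynomial σ K) βv with hβdef
  have hphiβ : ∀ u, phi K m d (β u) = g u := by
    intro u
    rw [hβdef, Fintype.linearCombination_apply, map_sum]
    rw [Finset.sum_congr rfl fun j _ => by rw [map_smul, hβv j]]
    exact sum_smul_map g u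
  -- D = id - β ∘ α maps everything to the syzygy module
  set D := (LinearMap.id : (Fin (m + 1) → MvPolynomial σ K) →ₗ[MvPolynomial σ K] _)
      - β ∘ₗ α with hDdef
  have hDv : ∀ v, D v = v - β (α v) := fun v => rfl
  have hDker : ∀ v, D v ∈ LinearMap.ker (phi K m d) := by
    intro v
    rw [LinearMap.mem_ker, hDv, map_sub, hphiβ, hgα, sub_self]
  -- τ1
  have hc : ∀ i : Fin (m + 1), ∃ c : Fin s → MvPolynomial σ K,
      sig (K := K) d e c = D (Pi.single i 1) := by
    intro i
    have := hDker (Pi.single i 1)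
    rw [← hURange] at this
    exact this
  choose cc hcc using hc
  set τ1 := Fintype.linearCombination (MvPolynomial σ K) cc with hτ1def
  have hτ1 : ∀ v, sig (K := K) d e (τ1 v) = D v := by
    intro v
    rw [hτ1def, Fintype.linearCombination_apply, map_sum]
    rw [Finset.sum_congr rfl fun i _ => by rw [map_smul, hcc i]]
    exact sum_smul_map D v
  -- the map lambda
  have hlam : ∀ k : Fin s, ∃ ak : Fin a → MvPolynomial σ K, f ak = α (R k) := by
    intro k
    have h1 : α (R k) ∈ LinearMap.ker g := by
      rw [LinearMap.mem_ker, hgα]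
      exact phi_taylorRel d _ _ (hne k)
    rw [← hfg] at h1
    exact h1
  choose ak hak using hlam
  set lm := Fintype.linearCombination (MvPolynomial σ K) ak with hlmdef
  have hlm : ∀ q, f (lm q) = α (sig (K := K) d e q) := by
    intro q
    rw [hlmdef, Fintype.linearCombination_apply, map_sum]
    rw [Finset.sum_congr rfl fun k _ => by rw [map_smul, hak k]]
    rw [sig_apply, map_sum]
    exact Finset.sum_congr rfl fun k _ => by rw [map_smul]
  -- τ3
  have hc3 : ∀ j : Fin a, ∃ c' : Fin s → MvPolynomial σ K,
      sig (K := K) d e c' = β (f (Pi.single j 1)) := by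
    intro j
    have h1 : β (f (Pi.single j 1)) ∈ LinearMap.ker (phi K m d) := by
      rw [LinearMap.mem_ker, hphiβ]
      have : f (Pi.single j 1) ∈ LinearMap.ker g := by
        rw [← hfg]; exact ⟨_, rfl⟩
      exact this
    rw [← hURange] at h1
    exact h1
  choose c3 hc3' using hc3
  set τ3 := Fintype.linearCombination (MvPolynomial σ K) c3 with hτ3def
  have hτ3 : ∀ u, sig (K := K) d e (τ3 u) = β (f u) := by
    intro u
    rw [hτ3def, Fintype.linearCombination_apply, map_sum]
    rw [Finset.sum_congr rfl fun j _ => by rw [map_smul, hc3' j]]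
    exact sum_smul_map (β ∘ₗ f) u
  -- τ0
  set τ0 := τ1 ∘ₗ sig (K := K) d e + τ3 ∘ₗ lm with hτ0def
  have hτ0 : ∀ q, sig (K := K) d e (τ0 q) = sig (K := K) d e q := by
    intro q
    rw [hτ0def, LinearMap.add_apply, map_add, LinearMap.comp_apply, LinearMap.comp_apply,
      hτ1, hτ3, hlm, hDv, sub_add_cancel]
  have hτ0ker : ∀ q ∈ LinearMap.ker (sig (K := K) d e), τ0 q = 0 := by
    intro q hq
    rw [LinearMap.mem_ker] at hq
    have h1 : τ1 (sig (K := K) d e q) = 0 := by rw [hq, map_zero]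
    have h2 : lm q = 0 := by
      apply hf
      rw [hlm, hq, map_zero, map_zero]
    rw [hτ0def, LinearMap.add_apply, LinearMap.comp_apply, LinearMap.comp_apply,
      h1, h2, map_zero, add_zero]
  set p := (LinearMap.id : (Fin s → MvPolynomial σ K) →ₗ[MvPolynomial σ K] _) - τ0
    with hpdef
  have hpker : ∀ u, p u ∈ LinearMap.ker (sig (K := K) d e) := by
    intro u
    rw [LinearMap.mem_ker]
    have : p u = u - τ0 u := rfl
    rw [this, map_sub, hτ0, sub_self]
  have hzp : ∀ z ∈ LinearMap.ker (sig (K := K) d e), p z = z := by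
    intro z hz
    have : p z = z - τ0 z := rfl
    rw [this, hτ0ker z hz, sub_zero]
  set 𝔪 : Ideal (MvPolynomial σ K) :=
    RingHom.ker (constantCoeff : MvPolynomial σ K →+* K) with h𝔪
  have hZsub : LinearMap.ker (sig (K := K) d e) ≤
      𝔪 • LinearMap.ker (sig (K := K) d e) := by
    intro z hz
    have hz0 : ∀ k, constantCoeff (z k) = 0 := fun k =>
      dep_constantCoeff_eq_zero d e hne hU hmin z (LinearMap.mem_ker.mp hz) k
    have hdz : z = ∑ k, z k • p (Pi.single k 1) := by
      rw [sum_smul_map p z, hzp z hz]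
    rw [hdz]
    refine Submodule.sum_mem _ fun k _ => Submodule.smul_mem_smul ?_ (hpker _)
    rw [h𝔪, RingHom.mem_ker]
    exact hz0 k
  have hZfg : (LinearMap.ker (sig (K := K) d e)).FG := by
    have h1 : LinearMap.ker (sig (K := K) d e) = Submodule.map p ⊤ := by
      apply le_antisymm
      · intro z hz
        exact ⟨z, trivial, hzp z hz⟩
      · rintro _ ⟨u, -, rfl⟩
        exact hpker u
    rw [h1]
    exact Submodule.FG.map p (Module.finite_def.mp inferInstance)
  obtain ⟨r, hr1, hr0⟩ :=
    Submodule.exists_sub_one_mem_and_smul_eq_zero_of_fg_of_le_smul 𝔪 _ hZfg hZsub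
  have hrne : r ≠ 0 := by
    intro h
    rw [h𝔪, RingHom.mem_ker, map_sub, map_one, sub_eq_zero] at hr1
    rw [h, map_zero] at hr1
    exact one_ne_zero hr1.symm
  rw [eq_bot_iff]
  intro z hz
  have h1 := hr0 z hz
  have h2 : ∀ k, r * z k = 0 := by
    intro k
    have := congrFun h1 k
    simpa using this
  have h3 : ∀ k, z k = 0 := by
    intro k
    rcases mul_eq_zero.mp (h2 k) with h | h
    · exact absurd h hrne
    · exact h
  rw [Submodule.mem_bot]
  funext k
  exact h3 k

open nonZeroDivisors in
theorem card_le_of_ker_sig_eq_bot'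
    (F : Type*) [Field F] [Algebra (MvPolynomial σ K) F]
    [IsFractionRing (MvPolynomial σ K) F]
    (hne : ∀ k, (e k).1 ≠ (e k).2)
    (hker : LinearMap.ker (sig (K := K) d e) = ⊥) :
    s ≤ m := by
  classical
  set S := MvPolynomial σ K
  set ι : S →+* F := algebraMap S F with hι
  have hinj : Function.Injective ι := IsFractionRing.injective S F
  set R : Fin s → (Fin (m + 1) → S) :=
    fun k => taylorRel K m d (e k).1 (e k).2 with hR
  set uF : Fin (m + 1) → F := fun i => ι (monomial (d i) 1) with huF
  set phiF := Fintype.linearCombination F uF with hphiF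
  set Rbar : Fin s → (Fin (m + 1) → F) := fun k l => ι (R k l) with hRbar
  -- commutation
  have hcomm : ∀ v : Fin (m + 1) → S, phiF (fun l => ι (v l)) = ι (phi K m d v) := by
    intro v
    rw [hphiF, Fintype.linearCombination_apply, phi_apply, map_sum]
    exact Finset.sum_congr rfl fun i _ => by rw [smul_eq_mul, ← map_mul]
  -- independence
  have hind : LinearIndependent F Rbar := by
    rw [Fintype.linearIndependent_iff]
    intro c hc
    obtain ⟨bden, hbden⟩ :=
      IsLocalization.exist_integer_multiples (S⁰) Finset.univ c
    have hq : ∀ k : Fin s, ∃ qk : S, ι qk = (bden : S) • c k := fun k =>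
      hbden k (Finset.mem_univ k)
    choose q hq using hq
    have h1 : ∑ k, (ι (q k)) • Rbar k = 0 := by
      have : ∀ k, (ι (q k)) • Rbar k = (bden : S) • (c k • Rbar k) := by
        intro k
        rw [hq k, smul_assoc]
      rw [Finset.sum_congr rfl fun k _ => this k, ← Finset.smul_sum, hc, smul_zero]
    have h2 : sig (K := K) d e q = 0 := by
      funext l
      have h3 := congrFun h1 l
      have h4 : ∀ k, ((ι (q k)) • Rbar k) l = ι (q k * R k l) := by
        intro k
        simp [hRbar, Pi.smul_apply, smul_eq_mul, map_mul]
      rw [Finset.sum_apply] at h3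
      rw [Finset.sum_congr rfl fun k _ => h4 k, ← map_sum, Pi.zero_apply] at h3
      have h5 : (∑ k, q k * R k l) = 0 := by
        apply hinj
        rw [h3, map_zero]
      rw [sig_apply, Finset.sum_apply]
      simpa [smul_eq_mul] using h5
    have h6 : q = 0 := by
      have : q ∈ LinearMap.ker (sig (K := K) d e) := LinearMap.mem_ker.mpr h2
      rwa [hker, Submodule.mem_bot] at this
    intro k
    have h7 : ι (q k) = (bden : S) • c k := hq k
    rw [h6] at h7
    simp only [Pi.zero_apply, map_zero] at h7
    have h8 : (ι (bden : S)) * c k = 0 := by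
      rw [← Algebra.smul_def, ← h7]
    have h9 : ι (bden : S) ≠ 0 := by
      intro h
      exact nonZeroDivisors.coe_ne_zero bden (hinj (by rw [h, map_zero]))
    rcases mul_eq_zero.mp h8.symm.symm with h | h
    · exact absurd h h9
    · exact h
  -- each Rbar lies in ker phiF
  have hmem : ∀ k, Rbar k ∈ LinearMap.ker phiF := by
    intro k
    rw [LinearMap.mem_ker]
    have : Rbar k = fun l => ι (R k l) := rfl
    rw [this, hcomm, phi_taylorRel d _ _ (hne k), map_zero]
  -- phiF is surjective
  have hu0 : ι (monomial (d 0) 1) ≠ 0 := by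
    intro h
    have h2 : (monomial (d 0) 1 : S) = 0 := hinj (by rw [h, map_zero])
    rw [monomial_eq_zero] at h2
    exact one_ne_zero h2
  have hsurj : LinearMap.range phiF = ⊤ := by
    rcases Ideal.eq_bot_or_top (LinearMap.range phiF) with hbot | htop
    · exfalso
      set vv : Fin (m + 1) → F := fun l => if l = 0 then 1 else 0 with hvv
      have h1 : phiF vv ∈ LinearMap.range phiF := ⟨vv, rfl⟩
      rw [hbot, Submodule.mem_bot] at h1
      have h2 : phiF vv = uF 0 := by
        rw [hphiF, Fintype.linearCombination_apply]
        rw [Finset.sum_eq_single_of_mem 0 (Finset.mem_univ 0) ?h9]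
        · simp [hvv]
        case h9 =>
          intro l _ hl
          simp [hvv, hl]
      rw [h2] at h1
      exact hu0 h1
    · exact htop
  -- dimension count
  have hrank : Module.finrank F (LinearMap.ker phiF) = m := by
    have h1 := LinearMap.finrank_range_add_finrank_ker phiF
    rw [hsurj, finrank_top, Module.finrank_self] at h1
    have h2 : Module.finrank F (Fin (m + 1) → F) = m + 1 := by
      simp [Module.finrank_pi]
    rw [h2] at h1
    omega
  -- conclude
  set Rbar' : Fin s → LinearMap.ker phiF := fun k => ⟨Rbar k, hmem k⟩ with hRbar'
  have hind' : LinearIndependent F Rbar' := by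
    apply LinearIndependent.of_comp (LinearMap.ker phiF).subtype
    have : ((LinearMap.ker phiF).subtype ∘ Rbar') = Rbar := rfl
    rw [this]
    exact hind
  have := hind'.fintype_card_le_finrank
  rw [hrank] at this
  simpa using this

open nonZeroDivisors in
theorem card_le_of_ker_sig_eq_bot
    (hne : ∀ k, (e k).1 ≠ (e k).2)
    (hker : LinearMap.ker (sig (K := K) d e) = ⊥) :
    s ≤ m :=
  card_le_of_ker_sig_eq_bot' d e (FractionRing (MvPolynomial σ K)) hne hker

end Homological

end Lemmas

section Glue

open scoped Classical

variable {K : Type*} [Field K] {σ : Type*} {m : ℕ} (d : Fin (m + 1) → (σ →₀ ℕ))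

/-- A set of pairs whose Taylor relations generate the syzygy module. -/
def Goodset (K : Type*) [Field K] {σ : Type*} {m : ℕ} (d : Fin (m + 1) → (σ →₀ ℕ))
    (T : Finset (Fin (m + 1) × Fin (m + 1))) : Prop :=
  (∀ p ∈ T, p.1 ≠ p.2) ∧
    Submodule.span (MvPolynomial σ K)
      ((fun p : Fin (m + 1) × Fin (m + 1) => taylorRel K m d p.1 p.2) '' ↑T) =
      LinearMap.ker (phi K m d)

lemma good_univ :
    Goodset K d (Finset.univ.filter
      fun p : Fin (m + 1) × Fin (m + 1) => p.1 ≠ p.2) := by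
  constructor
  · intro p hp
    exact (Finset.mem_filter.mp hp).2
  · have himg : ((fun p : Fin (m + 1) × Fin (m + 1) => taylorRel K m d p.1 p.2) ''
        ↑(Finset.univ.filter fun p : Fin (m + 1) × Fin (m + 1) => p.1 ≠ p.2)) =
        TRels d := by
      ext w
      constructor
      · rintro ⟨p, hp, rfl⟩
        rw [Finset.mem_coe, Finset.mem_filter] at hp
        exact ⟨p.1, p.2, hp.2, rfl⟩
      · rintro ⟨i, j, hij, rfl⟩
        exact ⟨(i, j), by simp [hij], rfl⟩
    rw [himg, ker_phi_eq_span]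

lemma exists_min_good : ∃ T, Goodset K d T ∧ ∀ p ∈ T, ¬ Goodset K d (T.erase p) := by
  suffices h : ∀ T0 : Finset (Fin (m + 1) × Fin (m + 1)), Goodset K d T0 →
      ∃ T, Goodset K d T ∧ ∀ p ∈ T, ¬ Goodset K d (T.erase p) by
    exact h _ (good_univ d)
  intro T0
  induction T0 using Finset.strongInduction with
  | _ T0 ih =>
    intro hG
    by_cases h : ∃ p ∈ T0, Goodset K d (T0.erase p)
    · obtain ⟨p, hp, hGp⟩ := h
      exact ih (T0.erase p) (Finset.erase_ssubset hp) hGp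
    · push_neg at h
      exact ⟨T0, hG, h⟩

theorem exists_isHB_data {a b : ℕ}
    (f : (Fin a → MvPolynomial σ K) →ₗ[MvPolynomial σ K] (Fin b → MvPolynomial σ K))
    (g : (Fin b → MvPolynomial σ K) →ₗ[MvPolynomial σ K] MvPolynomial σ K)
    (hf : Function.Injective f) (hfg : LinearMap.range f = LinearMap.ker g)
    (hgphi : LinearMap.range g = LinearMap.range (phi K m d)) :
    ∃ t : Fin m → Fin (m + 1) × Fin (m + 1),
      (∀ k, (t k).1 ≠ (t k).2) ∧
      Submodule.span (MvPolynomial σ K)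
          (Set.range fun k => taylorRel K m d (t k).1 (t k).2) =
        LinearMap.ker (phi K m d) := by
  obtain ⟨T, hTg, hTmin⟩ := exists_min_good (K := K) d
  set s := T.card with hs
  set e : Fin s → Fin (m + 1) × Fin (m + 1) := fun k => (T.equivFin.symm k : _) with he
  have heinj : Function.Injective e := by
    intro k1 k2 h
    have := Subtype.ext (p := fun x => x ∈ T) h
    exact T.equivFin.symm.injective this
  have hemem : ∀ k, e k ∈ T := fun k => (T.equivFin.symm k).2
  have hvalT : ∀ (p : Fin (m + 1) × Fin (m + 1)) (hp : p ∈ T),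
      e (T.equivFin ⟨p, hp⟩) = p := by
    intro p hp
    rw [he]
    simp
  have hne : ∀ k, (e k).1 ≠ (e k).2 := fun k => hTg.1 _ (hemem k)
  have hrangeset : (Set.range fun k => taylorRel K m d (e k).1 (e k).2) =
      (fun p : Fin (m + 1) × Fin (m + 1) => taylorRel K m d p.1 p.2) '' ↑T := by
    ext w
    constructor
    · rintro ⟨k, rfl⟩
      exact ⟨e k, hemem k, rfl⟩
    · rintro ⟨p, hp, rfl⟩
      refine ⟨T.equivFin ⟨p, hp⟩, ?_⟩
      show taylorRel K m d (e (T.equivFin ⟨p, hp⟩)).1 (e (T.equivFin ⟨p, hp⟩)).2 =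
        taylorRel K m d p.1 p.2
      rw [hvalT p hp]
  have hU : Submodule.span (MvPolynomial σ K)
      (Set.range fun k => taylorRel K m d (e k).1 (e k).2) =
      LinearMap.ker (phi K m d) := by
    rw [hrangeset]; exact hTg.2
  have hmin : ∀ k0 : Fin s, Submodule.span (MvPolynomial σ K)
      ((fun k => taylorRel K m d (e k).1 (e k).2) '' {k | k ≠ k0}) ≠
      LinearMap.ker (phi K m d) := by
    intro k0 hcon
    apply hTmin (e k0) (hemem k0)
    constructor
    · intro p hp
      exact hTg.1 p (Finset.mem_of_mem_erase hp)
    · have himg : (fun p : Fin (m + 1) × Fin (m + 1) => taylorRel K m d p.1 p.2) ''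
          ↑(T.erase (e k0)) =
          (fun k => taylorRel K m d (e k).1 (e k).2) '' {k | k ≠ k0} := by
        ext w
        constructor
        · rintro ⟨p, hp, rfl⟩
          rw [Finset.mem_coe, Finset.mem_erase] at hp
          have hpe : e (T.equivFin ⟨p, hp.2⟩) = p := hvalT p hp.2
          refine ⟨T.equivFin ⟨p, hp.2⟩, ?_, ?_⟩
          · intro hk
            apply hp.1
            rw [← hpe, hk]
          · show taylorRel K m d (e (T.equivFin ⟨p, hp.2⟩)).1
                (e (T.equivFin ⟨p, hp.2⟩)).2 = taylorRel K m d p.1 p.2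
            rw [hpe]
        · rintro ⟨k, hk, rfl⟩
          refine ⟨e k, ?_, rfl⟩
          rw [Finset.mem_coe, Finset.mem_erase]
          exact ⟨fun hc => hk (heinj hc), hemem k⟩
      rw [himg]
      exact hcon
  have hker := ker_sig_eq_bot d e hne hU hmin f g hf hfg hgphi
  have hsm : s ≤ m := card_le_of_ker_sig_eq_bot d e hne hker
  by_cases hm : m = 0
  · subst hm
    have hs0 : s = 0 := le_antisymm hsm (Nat.zero_le _)
    refine ⟨fun k => k.elim0, fun k => k.elim0, ?_⟩
    haveI hE : IsEmpty (Fin s) := by rw [hs0]; infer_instance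
    rw [Set.range_eq_empty _] at hU
    rw [Set.range_eq_empty _]
    exact hU
  · have hm1 : 0 < m := Nat.pos_of_ne_zero hm
    have hs1 : 0 < s := by
      by_contra h
      have hs0 : s = 0 := by omega
      haveI hE : IsEmpty (Fin s) := by rw [hs0]; infer_instance
      rw [Set.range_eq_empty _, Submodule.span_empty] at hU
      set i0 : Fin (m + 1) := ⟨0, by omega⟩
      set i1 : Fin (m + 1) := ⟨1, by omega⟩
      have h01 : i0 ≠ i1 := by
        intro h
        have := congrArg Fin.val h
        simp [i0, i1] at this
      have hmem : taylorRel K m d i0 i1 ∈ LinearMap.ker (phi K m d) :=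
        LinearMap.mem_ker.mpr (phi_taylorRel d i0 i1 h01)
      rw [← hU, Submodule.mem_bot] at hmem
      have h2 := congrFun hmem i1
      rw [taylorRel_snd, Pi.zero_apply] at h2
      rw [monomial_eq_zero] at h2
      exact one_ne_zero h2
    set idx : Fin m → Fin s :=
      fun k => ⟨if (k : ℕ) < s then (k : ℕ) else 0, by split <;> omega⟩ with hidx
    refine ⟨fun k => e (idx k), fun k => hne _, ?_⟩
    have hre : (Set.range fun k : Fin m =>
        taylorRel K m d (e (idx k)).1 (e (idx k)).2) =
        (Set.range fun k : Fin s => taylorRel K m d (e k).1 (e k).2) := by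
      ext w
      constructor
      · rintro ⟨k, rfl⟩
        exact ⟨idx k, rfl⟩
      · rintro ⟨k', rfl⟩
        refine ⟨⟨(k' : ℕ), lt_of_lt_of_le k'.2 hsm⟩, ?_⟩
        have hik : idx ⟨(k' : ℕ), lt_of_lt_of_le k'.2 hsm⟩ = k' := by
          rw [hidx]
          apply Fin.ext
          simp [k'.2]
        show taylorRel K m d (e (idx ⟨(k' : ℕ), lt_of_lt_of_le k'.2 hsm⟩)).1
            (e (idx ⟨(k' : ℕ), lt_of_lt_of_le k'.2 hsm⟩)).2 =
          taylorRel K m d (e k').1 (e k').2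
        rw [hik]
    rw [hre]
    exact hU

theorem isHB_connected (t : Fin m → Fin (m + 1) × Fin (m + 1))
    (h1 : ∀ k, (t k).1 ≠ (t k).2)
    (h2 : Submodule.span (MvPolynomial σ K)
        (Set.range fun k => taylorRel K m d (t k).1 (t k).2) =
      LinearMap.ker (phi K m d)) :
    (SimpleGraph.fromRel fun i j => ∃ k, t k = (i, j)).Connected := by
  set G := SimpleGraph.fromRel fun i j : Fin (m + 1) => ∃ k, t k = (i, j) with hG
  rw [SimpleGraph.connected_iff]
  refine ⟨?_, ⟨0⟩⟩
  intro x y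
  by_contra hxy
  set ψ := Fintype.linearCombination (MvPolynomial σ K)
    (fun l => if G.Reachable x l then (monomial (d l) 1 : MvPolynomial σ K) else 0)
    with hψ
  have hψt : ∀ i j : Fin (m + 1), i ≠ j →
      (G.Reachable x i ↔ G.Reachable x j) → ψ (taylorRel K m d i j) = 0 := by
    intro i j hij hiff
    rw [hψ, Fintype.linearCombination_apply]
    rw [Finset.sum_eq_add_of_mem i j (Finset.mem_univ i) (Finset.mem_univ j) hij ?z]
    case z =>
      intro cl _ hcl
      rw [taylorRel_other d i j cl hcl.1 hcl.2, zero_smul]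
    rw [taylorRel_fst d i j hij, taylorRel_snd d i j]
    by_cases hri : G.Reachable x i
    · rw [if_pos hri, if_pos (hiff.mp hri)]
      rw [smul_eq_mul, smul_eq_mul, neg_mul, monomial_mul, monomial_mul, one_mul,
        exp_sub_add]
      ring
    · rw [if_neg hri, if_neg (fun h => hri (hiff.mpr h)), smul_zero, smul_zero, add_zero]
  have hkerψ : LinearMap.ker (phi K m d) ≤ LinearMap.ker ψ := by
    rw [← h2, Submodule.span_le]
    rintro w ⟨k, rfl⟩
    rw [SetLike.mem_coe, LinearMap.mem_ker]
    apply hψt _ _ (h1 k)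
    have hadj : G.Adj (t k).1 (t k).2 := by
      rw [hG, SimpleGraph.fromRel_adj]
      exact ⟨h1 k, Or.inl ⟨k, rfl⟩⟩
    exact ⟨fun h => h.trans hadj.reachable, fun h => h.trans hadj.symm.reachable⟩
  have hxyne : x ≠ y := by
    rintro rfl
    exact hxy (SimpleGraph.Reachable.refl x)
  have hmem : taylorRel K m d y x ∈ LinearMap.ker (phi K m d) :=
    LinearMap.mem_ker.mpr (phi_taylorRel d y x (Ne.symm hxyne))
  have hval : ψ (taylorRel K m d y x) = 0 := hkerψ hmem
  rw [hψ, Fintype.linearCombination_apply] at hval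
  rw [Finset.sum_eq_add_of_mem y x (Finset.mem_univ y) (Finset.mem_univ x)
    (Ne.symm hxyne) ?z2] at hval
  case z2 =>
    intro cl _ hcl
    rw [taylorRel_other d y x cl hcl.1 hcl.2, zero_smul]
  rw [taylorRel_fst d y x (Ne.symm hxyne), taylorRel_snd d y x] at hval
  rw [if_neg hxy, if_pos (SimpleGraph.Reachable.refl x), smul_zero, zero_add,
    smul_eq_mul, monomial_mul, one_mul] at hval
  rw [monomial_eq_zero] at hval
  exact one_ne_zero hval

theorem isHB_isTree (t : Fin m → Fin (m + 1) × Fin (m + 1))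
    (h1 : ∀ k, (t k).1 ≠ (t k).2)
    (h2 : Submodule.span (MvPolynomial σ K)
        (Set.range fun k => taylorRel K m d (t k).1 (t k).2) =
      LinearMap.ker (phi K m d)) :
    (SimpleGraph.fromRel fun i j => ∃ k, t k = (i, j)).IsTree := by
  set G := SimpleGraph.fromRel fun i j : Fin (m + 1) => ∃ k, t k = (i, j) with hG
  have hconn : G.Connected := isHB_connected d t h1 h2
  have hcount : G.edgeFinset.card ≤ m := by
    have hsub : G.edgeFinset ⊆
        Finset.univ.image (fun k => s((t k).1, (t k).2)) := by
      intro ed hed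
      induction ed with
      | h i j =>
        rw [SimpleGraph.mem_edgeFinset, SimpleGraph.mem_edgeSet, hG,
          SimpleGraph.fromRel_adj] at hed
        rcases hed.2 with ⟨k, hk⟩ | ⟨k, hk⟩
        · refine Finset.mem_image.mpr ⟨k, Finset.mem_univ k, ?_⟩
          rw [hk]
        · refine Finset.mem_image.mpr ⟨k, Finset.mem_univ k, ?_⟩
          rw [hk, Sym2.eq_swap]
    calc G.edgeFinset.card ≤ (Finset.univ.image (fun k => s((t k).1, (t k).2))).card :=
          Finset.card_le_card hsub
      _ ≤ (Finset.univ : Finset (Fin m)).card := Finset.card_image_le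
      _ = m := by simp
  refine ⟨hconn, isAcyclic_of_card G hconn ?_⟩
  have : Fintype.card (Fin (m + 1)) = m + 1 := by simp
  omega

end Glue

end Aux

end CMCodim2

open CMCodim2 MvPolynomial
/-- Let `I ⊂ S` be a Cohen–Macaulay monomial ideal of codimension 2
minimally generated by `m+1` monomials. Then a minimal generating set of the first
syzygy module `U` can be chosen among the Taylor relations, i.e. `I` admits a
Hilbert–Burch matrix whose rows are Taylor relations; moreover, the graph on `[m+1]`
attached to any such matrix (an edge `{i,j}` whenever some row has its nonzero entries
in columns `i` and `j`) is a tree on `m+1` vertices. -/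
theorem statement7 (K : Type*) [Field K] {n m : ℕ}
    (d : Fin (m + 1) → (Fin n →₀ ℕ)) (I : Ideal (MvPolynomial (Fin n) K))
    (hgen : MinGens K m d I) (hcm : IsCMCodim2 I) :
    (∃ t : Fin m → Fin (m + 1) × Fin (m + 1), IsHB K m d t) ∧
      ∀ t : Fin m → Fin (m + 1) × Fin (m + 1), IsHB K m d t → (relGraph t).IsTree := by
  obtain ⟨hI, -⟩ := hgen
  obtain ⟨-, a, b, f, g, hf, hfg, hgI⟩ := hcm
  have hgphi : LinearMap.range g = LinearMap.range (phi K m d) := by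
    rw [hgI, hI, range_phi]
  constructor
  · obtain ⟨t, ht1, ht2⟩ := exists_isHB_data d f g hf hfg hgphi
    exact ⟨t, ht1, ht2⟩
  · rintro t ⟨h1, h2⟩
    exact isHB_isTree d t h1 h2
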